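/- Let g be a finite-dimensional Lie algebra over an infinite field K, and let a, b ∈ g with C(a) ∩ C(b) = {0}. Then the set U(a) = {y ∈ g : C(a) ∩ C(y) = {0}} contains a Zariski-dense open subset of g; in particular, for any finite-dimensional Lie algebra satisfying the C-condition, the set of y such that C(a) ∩ C(y) = 0 for the fixed a is Zariski dense. -/

import Mathlib

open Matrix MvPolynomial

lemma my_lie_sum {g : Type*} [LieRing g] {ι : Type*} (s : Finset ι) (x : g) (f : ι → g) :
    ⁅x, ∑ i ∈ s, f i⁆ = ∑ i ∈ s, ⁅x, f i⁆ := by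
  induction s using Finset.cons_induction with
  | empty => simp
  | cons a s h ih => simp [Finset.sum_cons, ih]

lemma my_sum_lie {g : Type*} [LieRing g] {ι : Type*} (s : Finset ι) (x : g) (f : ι → g) :
    ⁅∑ i ∈ s, f i, x⁆ = ∑ i ∈ s, ⁅f i, x⁆ := by
  induction s using Finset.cons_induction with
  | empty => simp
  | cons a s h ih => simp [Finset.sum_cons, ih]

lemma aux_submatrix {K : Type*} [Field K] {m : Type*} [Fintype m] {d : ℕ}
    (M : Matrix m (Fin d) K) (h : ∀ x, M *ᵥ x = 0 → x = 0) :
    ∃ r : Fin d → m, (M.submatrix r id).det ≠ 0 := by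
  classical
  have hker : LinearMap.ker M.mulVecLin = ⊥ := LinearMap.ker_eq_bot'.2 (fun x hx => h x hx)
  have hinj : Function.Injective M.mulVecLin := LinearMap.ker_eq_bot.mp hker
  have hrank : M.rank = d := by
    rw [Matrix.rank, LinearMap.finrank_range_of_inj hinj]
    simp [Module.finrank_pi]
  have hspanrow : Module.finrank K (Submodule.span K (Set.range M)) = d := by
    have := M.rank_eq_finrank_span_row
    rw [hrank] at this
    exact this.symm
  obtain ⟨t, hts, hspan, hli⟩ := exists_linearIndependent K (Set.range M)
  have hfin : t.Finite := hli.setFinite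
  haveI : Fintype t := hfin.fintype
  have hcard : Fintype.card t = d := by
    have := linearIndependent_iff_card_eq_finrank_span.mp hli
    rw [this, Set.finrank, Subtype.range_coe, hspan, hspanrow]
  let e : Fin d ≃ t := (Fintype.equivFinOfCardEq hcard).symm
  have hmem : ∀ i : Fin d, ∃ j : m, M j = (e i : Fin d → K) := fun i => hts (e i).2
  choose r hr using hmem
  refine ⟨r, ?_⟩
  have hrows : LinearIndependent K (fun i : Fin d => (M.submatrix r id) i) := by
    have : (fun i : Fin d => (M.submatrix r id) i) = fun i => ((e i : Fin d → K)) := by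
      funext i
      ext j
      simp [Matrix.submatrix_apply, hr i]
    rw [this]
    exact hli.comp (fun i => e i) (fun i j hij => e.injective hij)
  have := Matrix.linearIndependent_rows_iff_isUnit.mp hrows
  exact ((Matrix.isUnit_iff_isUnit_det _).mp this).ne_zero

theorem stmt_15 (K : Type*) [Field K] [Infinite K]
    (g : Type*) [LieRing g] [LieAlgebra K g] [FiniteDimensional K g]
    (d : ℕ) (B : Module.Basis (Fin d) K g) (a b : g)
    (hab : ∀ c : g, ⁅a, c⁆ = 0 → ⁅b, c⁆ = 0 → c = 0) :
    ∃ P : MvPolynomial (Fin d) K, P ≠ 0 ∧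
      ∀ y : Fin d → K, MvPolynomial.eval y P ≠ 0 →
        ∀ c : g, ⁅a, c⁆ = 0 → ⁅∑ i, y i • B i, c⁆ = 0 → c = 0 := by
  classical
  set N : Matrix (Fin d ⊕ Fin d) (Fin d) (MvPolynomial (Fin d) K) :=
    Matrix.of (fun p j => Sum.elim
      (fun i => MvPolynomial.C (B.repr ⁅a, B j⁆ i))
      (fun i => ∑ k, MvPolynomial.X k * MvPolynomial.C (B.repr ⁅B k, B j⁆ i)) p) with hNdef
  -- the evaluated matrix computes the brackets
  have key : ∀ (y : Fin d → K) (c : g),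
      (N.map (MvPolynomial.eval y)) *ᵥ (fun j => B.repr c j)
        = Sum.elim (fun i => B.repr ⁅a, c⁆ i) (fun i => B.repr ⁅∑ i, y i • B i, c⁆ i) := by
    intro y c
    funext p
    have hc : c = ∑ j, B.repr c j • B j := (B.sum_repr c).symm
    cases p with
    | inl i =>
        have : ⁅a, c⁆ = ∑ j, B.repr c j • ⁅a, B j⁆ := by
          conv_lhs => rw [hc]
          simp only [my_lie_sum, lie_smul]
        simp only [Sum.elim_inl, Matrix.mulVec, dotProduct, Matrix.map_apply, hNdef,
          Matrix.of_apply, Sum.elim_inl, map_C, this, map_sum, _root_.map_smul]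
        simp [mul_comm]
    | inr i =>
        have : ⁅∑ i, y i • B i, c⁆ = ∑ j, B.repr c j • ∑ k, y k • ⁅B k, B j⁆ := by
          conv_lhs => rw [hc]
          simp only [my_lie_sum, my_sum_lie, lie_smul, smul_lie, Finset.smul_sum]
        simp only [Sum.elim_inr, Matrix.mulVec, dotProduct, Matrix.map_apply, hNdef,
          Matrix.of_apply, Sum.elim_inr, this, map_sum, _root_.map_smul]
        simp [Finset.sum_mul, mul_comm, mul_left_comm]
  -- at y₀ = coordinates of b the kernel is trivial
  set y₀ : Fin d → K := fun i => B.repr b i with hy₀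
  have hb : ∑ i, y₀ i • B i = b := B.sum_repr b
  have hM0 : ∀ x, (N.map (MvPolynomial.eval y₀)) *ᵥ x = 0 → x = 0 := by
    intro x hx
    set c : g := ∑ j, x j • B j with hcdef
    have hxc : (fun j => B.repr c j) = x := by
      funext j
      simp [hcdef, Finsupp.single_apply]
    have h2 := key y₀ c
    rw [hxc, hx] at h2
    have h3 : ⁅a, c⁆ = 0 := by
      apply B.repr.injective
      ext i
      have := congrFun h2.symm (Sum.inl i)
      simpa using this
    have h4 : ⁅b, c⁆ = 0 := by
      apply B.repr.injective
      ext i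
      have := congrFun h2.symm (Sum.inr i)
      rw [hb] at this
      simpa using this
    have h5 : c = 0 := hab c h3 h4
    rw [← hxc, h5]
    funext j
    simp
  obtain ⟨r, hr⟩ := aux_submatrix (N.map (MvPolynomial.eval y₀)) hM0
  refine ⟨(N.submatrix r id).det, ?_, ?_⟩
  · intro h0
    apply hr
    have : (N.map (MvPolynomial.eval y₀)).submatrix r id = (N.submatrix r id).map (MvPolynomial.eval y₀) := rfl
    rw [this, ← RingHom.mapMatrix_apply, ← RingHom.map_det, h0, map_zero]
  · intro y hy c hac hyc
    have hdet : ((N.map (MvPolynomial.eval y)).submatrix r id).det ≠ 0 := by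
      have : (N.map (MvPolynomial.eval y)).submatrix r id = (N.submatrix r id).map (MvPolynomial.eval y) := rfl
      rw [this, ← RingHom.mapMatrix_apply, ← RingHom.map_det]
      exact hy
    have hunit : IsUnit ((N.map (MvPolynomial.eval y)).submatrix r id) :=
      (Matrix.isUnit_iff_isUnit_det _).mpr hdet.isUnit
    have hzero : (N.map (MvPolynomial.eval y)) *ᵥ (fun j => B.repr c j) = 0 := by
      rw [key y c, hac, hyc]
      funext p
      cases p <;> simp
    have hsub : ((N.map (MvPolynomial.eval y)).submatrix r id) *ᵥ (fun j => B.repr c j) = 0 := by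
      funext i
      have := congrFun hzero (r i)
      simpa [Matrix.mulVec, dotProduct, Matrix.submatrix_apply] using this
    have hx0 : (fun j => B.repr c j) = 0 := by
      haveI := hunit.invertible
      have hinj := Matrix.mulVec_injective_of_invertible ((N.map (MvPolynomial.eval y)).submatrix r id)
      apply hinj
      rw [hsub, Matrix.mulVec_zero]
    have : B.repr c = 0 := by
      ext j
      exact congrFun hx0 j
    have := B.repr.injective (by simpa using this)
    simpa using this
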